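/- Let g : (0,∞) → [0,∞) be a non-increasing, right-continuous function, and let C > 0, α ≥ 1, λ ∈ (0,1/2) and M ≥ 1 be constants. Assume that t·g(t+s) ≤ C·g(s)^{1+α} for every s > 0 and every t with 0 < t < λ, and that g(s) = 0 for every s ≥ M. Then for every ε > 0 one has g(s) = 0 for all s ≥ ε + (2MC/λ)·g(ε)^α. -/
import Mathlib


/-- Quantitative iteration bound underlying Lemma 3.4: if `g` is non-increasing, nonnegative
and right-continuous on `(0,∞)`, satisfies `t * g (t + s) ≤ C * g s ^ (1 + α)` for all
`s > 0` and `0 < t < λ` (with `α ≥ 1`, `λ ∈ (0,1/2)`), and `g s = 0` for `s ≥ M` with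
`M ≥ 1`, then for every `ε > 0` one has `g s = 0` for all `s ≥ ε + (2MC/λ) * g ε ^ α`. -/
theorem iteration_bound
    (g : ℝ → ℝ)
    (hmono : ∀ s t : ℝ, 0 < s → s ≤ t → g t ≤ g s)
    (hnonneg : ∀ s : ℝ, 0 < s → 0 ≤ g s)
    (hrc : ∀ s : ℝ, 0 < s → ContinuousWithinAt g (Set.Ioi s) s)
    (C α lam M : ℝ) (hC : 0 < C) (hα : 1 ≤ α) (hlam0 : 0 < lam) (hlam1 : lam < 1 / 2)
    (hM : 1 ≤ M)
    (hiter : ∀ s t : ℝ, 0 < s → 0 < t → t < lam → t * g (t + s) ≤ C * g s ^ (1 + α))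
    (hzero : ∀ s : ℝ, M ≤ s → g s = 0) :
    ∀ ε : ℝ, 0 < ε → ∀ s : ℝ, ε + (2 * M * C / lam) * g ε ^ α ≤ s → g s = 0 := by
  intro ε hε s hs
  have hα0 : (0:ℝ) < α := lt_of_lt_of_le one_pos hα
  by_cases hG0 : g ε = 0
  · -- trivial case: threshold is ε
    rw [hG0, Real.zero_rpow (ne_of_gt hα0), mul_zero, add_zero] at hs
    have h1 := hmono ε s hε hs
    rw [hG0] at h1
    exact le_antisymm h1 (hnonneg s (lt_of_lt_of_le hε hs))
  have hG : 0 < g ε := lt_of_le_of_ne (hnonneg ε hε) (Ne.symm hG0)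
  set G := g ε with hGdef
  set A : ℝ := G ^ α with hAdef
  have hA : 0 < A := Real.rpow_pos_of_pos hG α
  by_cases hcase : lam ≤ 2 * C * A
  · -- threshold already exceeds M
    have hDM : M ≤ (2 * M * C / lam) * A := by
      have h1 : (1:ℝ) ≤ 2 * C * A / lam := (one_le_div hlam0).mpr hcase
      calc M = M * 1 := (mul_one M).symm
        _ ≤ M * (2 * C * A / lam) := by
            exact mul_le_mul_of_nonneg_left h1 (le_trans zero_le_one hM)
        _ = (2 * M * C / lam) * A := by ring
    exact hzero s (le_trans hDM (le_trans (le_add_of_nonneg_left hε.le) hs))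
  push_neg at hcase
  -- main iteration case: 2 C A < lam
  set d : ℝ := 2 * C * A with hddef
  have hd : 0 < d := by positivity
  set seq : ℕ → ℝ := fun n => ε + 2 * d * (1 - (1/2:ℝ) ^ n) with hseq
  have hseq0 : ∀ n, 0 < seq n := by
    intro n
    have h1 : (1/2:ℝ) ^ n ≤ 1 := pow_le_one₀ (by norm_num) (by norm_num)
    have : 0 ≤ 2 * d * (1 - (1/2:ℝ) ^ n) :=
      mul_nonneg (by linarith [hd.le]) (by linarith)
    simp only [hseq]; linarith
  have hseqsucc : ∀ n, seq (n + 1) = d * (1/2:ℝ) ^ n + seq n := by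
    intro n
    simp only [hseq, pow_succ]
    ring
  have key : ∀ n, g (seq n) ≤ G * (1/2:ℝ) ^ n ∧ (g (seq n)) ^ α ≤ A * (1/2:ℝ) ^ n := by
    intro n
    induction n with
    | zero =>
      constructor <;> simp [hseq, hGdef, hAdef]
    | succ n ih =>
      obtain ⟨ih1, ih2⟩ := ih
      set B := g (seq n) with hBdef
      have hBnn : 0 ≤ B := hnonneg _ (hseq0 n)
      set t : ℝ := d * (1/2:ℝ) ^ n with htdef
      have ht : 0 < t := by positivity
      have htlam : t < lam := by
        have h1 : (1/2:ℝ) ^ n ≤ 1 := pow_le_one₀ (by norm_num) (by norm_num)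
        have : t ≤ d := by
          calc t = d * (1/2:ℝ)^n := rfl
            _ ≤ d * 1 := mul_le_mul_of_nonneg_left h1 hd.le
            _ = d := mul_one d
        exact lt_of_le_of_lt this hcase
      have hit := hiter (seq n) t (hseq0 n) ht htlam
      rw [← hseqsucc n] at hit
      have hmain : g (seq (n+1)) ≤ B / 2 := by
        rcases eq_or_lt_of_le hBnn with hB0 | hBpos
        · have hle : g (seq (n+1)) ≤ B := by
            apply hmono (seq n) (seq (n+1)) (hseq0 n)
            rw [hseqsucc n]; linarith [ht.le]
          rw [← hB0] at hle ⊢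
          simpa using le_trans hle (by norm_num)
        · have hpow : B ^ (1 + α) = B * B ^ α := by
            rw [Real.rpow_add hBpos, Real.rpow_one]
          rw [hpow] at hit
          have h2 : C * (B * B ^ α) ≤ C * (B * (A * (1/2:ℝ)^n)) := by
            apply mul_le_mul_of_nonneg_left _ hC.le
            exact mul_le_mul_of_nonneg_left ih2 hBnn
          have h3 : t * g (seq (n+1)) ≤ C * B * (A * (1/2:ℝ)^n) := by
            calc t * g (seq (n+1)) ≤ C * (B * B ^ α) := hit
              _ ≤ C * (B * (A * (1/2:ℝ)^n)) := h2
              _ = C * B * (A * (1/2:ℝ)^n) := by ring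
          have ht2 : C * B * (A * (1/2:ℝ)^n) = (B / 2) * t := by
            simp only [htdef, hddef]; ring
          rw [ht2] at h3
          exact le_of_mul_le_mul_right (by linarith [h3]) ht
      constructor
      · calc g (seq (n+1)) ≤ B / 2 := hmain
          _ ≤ (G * (1/2:ℝ)^n) / 2 := by linarith
          _ = G * (1/2:ℝ)^(n+1) := by rw [pow_succ]; ring
      · have hpa : g (seq (n+1)) ^ α ≤ (B / 2) ^ α :=
          Real.rpow_le_rpow (hnonneg _ (hseq0 (n+1))) hmain hα0.le
        have hdiv : (B / 2) ^ α = B ^ α / 2 ^ α := Real.div_rpow hBnn (by norm_num : (0:ℝ) ≤ 2) α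
        have h2a : (2:ℝ) ≤ 2 ^ α := by
          calc (2:ℝ) = 2 ^ (1:ℝ) := (Real.rpow_one 2).symm
            _ ≤ 2 ^ α := Real.rpow_le_rpow_of_exponent_le one_le_two hα
        have h2pos : (0:ℝ) < 2 ^ α := Real.rpow_pos_of_pos two_pos α
        have hBα : 0 ≤ B ^ α := Real.rpow_nonneg hBnn α
        calc g (seq (n+1)) ^ α ≤ B ^ α / 2 ^ α := by rw [← hdiv]; exact hpa
          _ ≤ B ^ α / 2 := by
              exact div_le_div_of_nonneg_left hBα two_pos h2a
          _ ≤ (A * (1/2:ℝ)^n) / 2 := by linarith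
          _ = A * (1/2:ℝ)^(n+1) := by rw [pow_succ]; ring
  -- now pass to the limit
  have hsge : ∀ n, seq n ≤ s := by
    intro n
    have h1 : (0:ℝ) ≤ (1/2:ℝ) ^ n := by positivity
    have h2 : seq n ≤ ε + 2 * d := by
      simp only [hseq]; nlinarith [hd.le]
    have h3 : 2 * d ≤ (2 * M * C / lam) * A := by
      have hl2 : (1:ℝ)/lam > 2 := by
        rw [gt_iff_lt, lt_div_iff₀ hlam0]; linarith
      have : (2 * M * C / lam) * A = M * (2 * C * A) * (1 / lam) := by ring
      rw [this]
      have hd4 : 2 * d = (2 * C * A) * 2 := by rw [hddef]; ring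
      rw [hd4]
      have hCA : 0 < 2 * C * A := by positivity
      have hM2 : (2:ℝ) ≤ M * (1/lam) := by nlinarith
      nlinarith
    linarith
  have hgs : ∀ n, g s ≤ G * (1/2:ℝ) ^ n := by
    intro n
    exact le_trans (hmono (seq n) s (hseq0 n) (hsge n)) (key n).1
  have htend : Filter.Tendsto (fun n : ℕ => G * (1/2:ℝ) ^ n) Filter.atTop (nhds 0) := by
    have := tendsto_pow_atTop_nhds_zero_of_lt_one (by norm_num : (0:ℝ) ≤ 1/2) (by norm_num : (1/2:ℝ) < 1)
    simpa using this.const_mul G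
  have hle0 : g s ≤ 0 := ge_of_tendsto' htend hgs
  have hspos : 0 < s := lt_of_lt_of_le (hseq0 0) (hsge 0)
  exact le_antisymm hle0 (hnonneg s hspos)
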